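/- Let (Q, μ) be a finite measure space and F : (−1,1) → ℝ a nondecreasing function with F(s) → +∞ as s → 1⁻ and F(s) → −∞ as s → −1⁺. Let φ_N : Q → ℝ (N ∈ ℕ) and φ : Q → ℝ be measurable functions such that |φ_N(x)| < 1 for μ-almost every x and every N, φ_N → φ μ-almost everywhere as N → ∞, and there exists a constant c with ∫_Q |F(φ_N(x))| dμ(x) ≤ c for all N. Then μ({x ∈ Q : |φ(x)| = 1}) = 0. -/

import Mathlib

open Filter MeasureTheory

/-- If `F : (−1,1) → ℝ` is nondecreasing and blows up at `±1`, `φ_N → φ` a.e. with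
`|φ_N| < 1` a.e., and `∫ |F(φ_N)| dμ ≤ c` uniformly in `N`, then the set where
`|φ| = 1` has measure zero. -/
theorem limit_order_parameter_strictly_less_one
    {Q : Type*} [MeasurableSpace Q] (μ : Measure Q) [IsFiniteMeasure μ]
    (F : ℝ → ℝ) (hFm : MonotoneOn F (Set.Ioo (-1) 1))
    (hFtop : Tendsto F (nhdsWithin 1 (Set.Ioo (-1) 1)) atTop)
    (hFbot : Tendsto F (nhdsWithin (-1) (Set.Ioo (-1) 1)) atBot)
    (φN : ℕ → Q → ℝ) (φ : Q → ℝ)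
    (hφNmeas : ∀ N, Measurable (φN N)) (hφmeas : Measurable φ)
    (hφNlt : ∀ N, ∀ᵐ x ∂μ, |φN N x| < 1)
    (hconv : ∀ᵐ x ∂μ, Tendsto (fun N => φN N x) atTop (nhds (φ x)))
    (c : ℝ)
    (hbound : ∀ N, ∫⁻ x, ENNReal.ofReal |F (φN N x)| ∂μ ≤ ENNReal.ofReal c) :
    μ {x | |φ x| = 1} = 0 := by
  have h11 : (-1 : ℝ) < 1 := by norm_num
  -- main claim: for each n, μ S ≤ ofReal c / ofReal (n+1)
  have key : ∀ n : ℕ, μ {x | |φ x| = 1} ≤ ENNReal.ofReal c / ENNReal.ofReal ((n : ℝ) + 1) := by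
    intro n
    set M : ℝ := (n : ℝ) + 1 with hM
    have hMpos : 0 < M := by positivity
    -- choose t near 1 with F t ≥ M
    have hne1 : (nhdsWithin (1:ℝ) (Set.Ioo (-1) 1)).NeBot := right_nhdsWithin_Ioo_neBot h11
    have hne2 : (nhdsWithin (-1:ℝ) (Set.Ioo (-1) 1)).NeBot := left_nhdsWithin_Ioo_neBot h11
    obtain ⟨t, htF, ht⟩ := ((hFtop.eventually_ge_atTop M).and self_mem_nhdsWithin).exists
    obtain ⟨s, hsF, hs⟩ := ((hFbot.eventually_le_atBot (-M)).and self_mem_nhdsWithin).exists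
    -- the bad sets
    set C : ℕ → Set Q := fun N =>
      {x | t < φN N x ∧ φN N x < 1} ∪ {x | -1 < φN N x ∧ φN N x < s} with hC
    have hCmeas : ∀ N, MeasurableSet (C N) := by
      intro N
      exact (((measurableSet_lt measurable_const (hφNmeas N)).inter
          (measurableSet_lt (hφNmeas N) measurable_const))).union
        (((measurableSet_lt measurable_const (hφNmeas N)).inter
          (measurableSet_lt (hφNmeas N) measurable_const)))
    have hCbound : ∀ N, μ (C N) ≤ ENNReal.ofReal c / ENNReal.ofReal M := by
      intro N
      have hmul : ENNReal.ofReal M * μ (C N) ≤ ENNReal.ofReal c := by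
        have h1 : ∫⁻ x in C N, ENNReal.ofReal M ∂μ ≤
            ∫⁻ x in C N, ENNReal.ofReal |F (φN N x)| ∂μ := by
          refine setLIntegral_mono' (hCmeas N) ?_
          intro x hx
          refine ENNReal.ofReal_le_ofReal ?_
          rcases hx with hx | hx
          · have hmem : φN N x ∈ Set.Ioo (-1 : ℝ) 1 := ⟨lt_trans ht.1 hx.1, hx.2⟩
            have : F t ≤ F (φN N x) := hFm ht hmem hx.1.le
            have : M ≤ F (φN N x) := le_trans htF this
            exact le_trans this (le_abs_self _)
          · have hmem : φN N x ∈ Set.Ioo (-1 : ℝ) 1 := ⟨hx.1, lt_trans hx.2 hs.2⟩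
            have h2 : F (φN N x) ≤ F s := hFm hmem hs hx.2.le
            have h3 : F (φN N x) ≤ -M := le_trans h2 hsF
            calc M ≤ -F (φN N x) := by linarith
              _ ≤ |F (φN N x)| := neg_le_abs _
        have h2 : ∫⁻ x in C N, ENNReal.ofReal |F (φN N x)| ∂μ ≤
            ∫⁻ x, ENNReal.ofReal |F (φN N x)| ∂μ := setLIntegral_le_lintegral _ _
        calc ENNReal.ofReal M * μ (C N) = ∫⁻ _ in C N, ENNReal.ofReal M ∂μ := by
              rw [setLIntegral_const]
          _ ≤ ENNReal.ofReal c := le_trans h1 (le_trans h2 (hbound N))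
      rw [ENNReal.le_div_iff_mul_le (Or.inl (ENNReal.ofReal_pos.2 hMpos).ne') (Or.inl ENNReal.ofReal_ne_top)]
      rw [mul_comm]
      exact hmul
    -- a.e. inclusion of S in ⋃ k ⋂ N ≥ k, C N
    set T : Set Q := ⋃ k, ⋂ N, ⋂ (_ : k ≤ N), C N with hT
    have hincl : {x | |φ x| = 1} ≤ᵐ[μ] T := by
      filter_upwards [ae_all_iff.2 hφNlt, hconv] with x hlt htend hx
      have hx' : φ x = 1 ∨ φ x = -1 := abs_eq (by norm_num : (0:ℝ) ≤ 1) |>.1 hx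
      rcases hx' with hx1 | hx1
      · have : ∀ᶠ N in atTop, t < φN N x := by
          rw [hx1] at htend
          exact htend.eventually (eventually_gt_nhds ht.2)
        obtain ⟨k, hk⟩ := this.exists_forall_of_atTop
        refine Set.mem_iUnion.2 ⟨k, ?_⟩
        simp only [Set.mem_iInter]
        intro N hN
        exact Or.inl ⟨hk N hN, (abs_lt.1 (hlt N)).2⟩
      · have : ∀ᶠ N in atTop, φN N x < s := by
          rw [hx1] at htend
          exact htend.eventually (eventually_lt_nhds hs.1)
        obtain ⟨k, hk⟩ := this.exists_forall_of_atTop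
        refine Set.mem_iUnion.2 ⟨k, ?_⟩
        simp only [Set.mem_iInter]
        intro N hN
        exact Or.inr ⟨(abs_lt.1 (hlt N)).1, hk N hN⟩
    have hTle : μ T ≤ ENNReal.ofReal c / ENNReal.ofReal M := by
      have hmono : Monotone fun k => ⋂ N, ⋂ (_ : k ≤ N), C N := by
        intro a b hab
        exact Set.iInter₂_mono' fun N hN => ⟨N, le_trans hab hN, le_rfl⟩
      rw [hT, hmono.directed_le.measure_iUnion]
      refine iSup_le fun k => le_trans (measure_mono ?_) (hCbound k)
      exact Set.iInter₂_subset k le_rfl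
    calc μ {x | |φ x| = 1} ≤ μ T := measure_mono_ae hincl
      _ ≤ ENNReal.ofReal c / ENNReal.ofReal M := hTle
  -- conclude
  have htend : Tendsto (fun n : ℕ => ENNReal.ofReal c / ENNReal.ofReal ((n : ℝ) + 1))
      atTop (nhds 0) := by
    have h1 : Tendsto (fun n : ℕ => c / ((n : ℝ) + 1)) atTop (nhds 0) :=
      tendsto_const_nhds.div_atTop (tendsto_natCast_atTop_atTop.atTop_add tendsto_const_nhds)
    have h2 : Tendsto (fun n : ℕ => ENNReal.ofReal (c / ((n : ℝ) + 1))) atTop (nhds 0) := by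
      simpa [Function.comp_def] using (ENNReal.continuous_ofReal.tendsto 0).comp h1
    refine h2.congr fun n => ?_
    rw [ENNReal.ofReal_div_of_pos (by positivity)]
  have := ge_of_tendsto htend (Eventually.of_forall key)
  exact le_antisymm this zero_le
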